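/- Let A ∈ ℂ^{n×n} with index k and Drazin inverse A^D. For any integer m ≥ k, A^D A^m (A^m)† = A^k (A^{k+1})†, i.e., the expression A^D A^m (A^m)† is independent of m ≥ k and equals the core-EP inverse of A. -/
import Mathlib


open Matrix

/-- `X` is the Moore-Penrose inverse of `A`. -/
def IsMoorePenrose {m n : ℕ} (A : Matrix (Fin m) (Fin n) ℂ)
    (X : Matrix (Fin n) (Fin m) ℂ) : Prop :=
  A * X * A = A ∧ X * A * X = X ∧ (A * X)ᴴ = A * X ∧ (X * A)ᴴ = X * A

/-- `X` is the Drazin inverse of `A` with respect to the index `k`. -/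
def IsDrazin {n : ℕ} (A X : Matrix (Fin n) (Fin n) ℂ) (k : ℕ) : Prop :=
  A ^ (k + 1) * X = A ^ k ∧ X * A * X = X ∧ A * X = X * A

theorem stmt_9 {n : ℕ} (A : Matrix (Fin n) (Fin n) ℂ) (k : ℕ)
    (hk : (A ^ k).rank = (A ^ (k + 1)).rank)
    (hmin : ∀ j : ℕ, (A ^ j).rank = (A ^ (j + 1)).rank → k ≤ j)
    (D : Matrix (Fin n) (Fin n) ℂ) (hD : IsDrazin A D k)
    (m : ℕ) (hm : k ≤ m)
    (P : Matrix (Fin n) (Fin n) ℂ) (hP : IsMoorePenrose (A ^ m) P)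
    (Q : Matrix (Fin n) (Fin n) ℂ) (hQ : IsMoorePenrose (A ^ (k + 1)) Q) :
    D * A ^ m * P = A ^ k * Q := by
  obtain ⟨h1, -, hcomm⟩ := hD
  have hc : Commute A D := hcomm
  have hcp : ∀ j : ℕ, A ^ j * D = D * A ^ j := fun j => (hc.pow_left j).eq
  -- A ^ (k + j) * D ^ j = A ^ k
  have hpow : ∀ j : ℕ, A ^ (k + j) * D ^ j = A ^ k := by
    intro j
    induction j with
    | zero => simp
    | succ j ih =>
      calc A ^ (k + (j + 1)) * D ^ (j + 1)
          = (A ^ j * A ^ (k + 1)) * (D * D ^ j) := by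
            rw [show k + (j + 1) = j + (k + 1) by omega, pow_add, pow_succ' D j]
        _ = A ^ j * ((A ^ (k + 1) * D) * D ^ j) := by
            simp only [mul_assoc]
        _ = A ^ j * A ^ k * D ^ j := by rw [h1, mul_assoc]
        _ = A ^ (k + j) * D ^ j := by
            rw [← pow_add, show j + k = k + j by omega]
        _ = A ^ k := ih
  obtain ⟨t, rfl⟩ := Nat.exists_eq_add_of_le hm
  have fact1 : A ^ (k + 1) * (D * A ^ t) = A ^ (k + t) := by
    rw [← mul_assoc, h1, ← pow_add]
  have fact2 : A ^ (k + t) * (A * D ^ t) = A ^ (k + 1) := by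
    calc A ^ (k + t) * (A * D ^ t)
        = (A ^ (k + t) * A) * D ^ t := by rw [mul_assoc]
      _ = A ^ (k + t + 1) * D ^ t := by rw [← pow_succ]
      _ = A * (A ^ (k + t) * D ^ t) := by rw [pow_succ', mul_assoc]
      _ = A * A ^ k := by rw [hpow t]
      _ = A ^ (k + 1) := (pow_succ' A k).symm
  obtain ⟨hP1, -, hP3, -⟩ := hP
  obtain ⟨hQ1, -, hQ3, -⟩ := hQ
  have e1 : (A ^ (k + 1) * Q) * (A ^ (k + t) * P) = A ^ (k + t) * P := by
    conv_lhs => rw [← fact1]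
    calc (A ^ (k + 1) * Q) * (A ^ (k + 1) * (D * A ^ t) * P)
        = (A ^ (k + 1) * Q * A ^ (k + 1)) * ((D * A ^ t) * P) := by
          simp only [mul_assoc]
      _ = A ^ (k + 1) * ((D * A ^ t) * P) := by rw [hQ1]
      _ = A ^ (k + 1) * (D * A ^ t) * P := by simp only [mul_assoc]
      _ = A ^ (k + t) * P := by rw [fact1]
  have e2 : (A ^ (k + t) * P) * (A ^ (k + 1) * Q) = A ^ (k + 1) * Q := by
    conv_lhs => rw [← fact2]
    calc (A ^ (k + t) * P) * (A ^ (k + t) * (A * D ^ t) * Q)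
        = (A ^ (k + t) * P * A ^ (k + t)) * ((A * D ^ t) * Q) := by
          simp only [mul_assoc]
      _ = A ^ (k + t) * ((A * D ^ t) * Q) := by rw [hP1]
      _ = A ^ (k + t) * (A * D ^ t) * Q := by simp only [mul_assoc]
      _ = A ^ (k + 1) * Q := by rw [fact2]
  have e3 : A ^ (k + t) * P = A ^ (k + 1) * Q := by
    have h := congrArg conjTranspose e1
    rw [conjTranspose_mul, hP3, hQ3] at h
    rw [← h, e2]
  have dA : D * A ^ (k + 1) = A ^ k := by rw [← hcp, h1]
  calc D * A ^ (k + t) * P = D * (A ^ (k + t) * P) := by rw [mul_assoc]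
    _ = D * (A ^ (k + 1) * Q) := by rw [e3]
    _ = (D * A ^ (k + 1)) * Q := by rw [mul_assoc]
    _ = A ^ k * Q := by rw [dA]
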